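/- Suppose f is C^p with D^p f globally Lipschitz with constant L_p, a step s_k satisfies T_{f,p}(x_k,0) - T_{f,p}(x_k,s_k) > (sigma_k/(p+1)!)||s_k||^{p+1}, and sigma_k >= 2 L_p. Then f(x_k) - f(x_k + s_k) > (sigma_k/(2(p+1)!)) ||s_k||^{p+1}. -/

import Mathlib

/-- Degree-`p` Taylor polynomial of `f` at `x`, evaluated at increment `s`. -/
noncomputable def taylorPoly {n : ℕ} (p : ℕ) (f : EuclideanSpace ℝ (Fin n) → ℝ)
    (x s : EuclideanSpace ℝ (Fin n)) : ℝ :=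
  f x + ∑ i ∈ Finset.Icc 1 p, (1 / (i.factorial : ℝ)) * iteratedFDeriv ℝ i f x (fun _ => s)

section aux

variable {n : ℕ} (f : EuclideanSpace ℝ (Fin n) → ℝ) (x s : EuclideanSpace ℝ (Fin n))

/-- one-dimensional restriction of the `i`-th derivative along the segment -/
noncomputable def gfun (i : ℕ) (t : ℝ) : ℝ :=
  iteratedFDeriv ℝ i f (x + t • s) (fun _ => s)

lemma gfun_hasDerivAt {p : ℕ} (hf : ContDiff ℝ (p : ℕ∞) f) {i : ℕ} (hi : i < p) (t : ℝ) :
    HasDerivAt (gfun f x s i) (gfun f x s (i+1) t) t := by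
  have hline : HasDerivAt (fun t : ℝ => x + t • s) s t := by
    simpa using ((hasDerivAt_id t).smul_const s).const_add x
  have hdiff : Differentiable ℝ (iteratedFDeriv ℝ i f) :=
    hf.differentiable_iteratedFDeriv (by exact_mod_cast hi)
  have hF := (hdiff (x + t • s)).hasFDerivAt
  have h1 : HasDerivAt (fun t : ℝ => iteratedFDeriv ℝ i f (x + t • s))
      (fderiv ℝ (iteratedFDeriv ℝ i f) (x + t • s) s) t := hF.comp_hasDerivAt t hline
  have h2 := (ContinuousMultilinearMap.apply ℝ (fun _ : Fin i => EuclideanSpace ℝ (Fin n)) ℝ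
      (fun _ => s)).hasFDerivAt.comp_hasDerivAt t h1
  have h3 : ((iteratedFDeriv ℝ (i + 1) f (x + t • s)) fun _ => s)
      = (fderiv ℝ (iteratedFDeriv ℝ i f) (x + t • s) s) (fun _ => s) := by
    rw [iteratedFDeriv_succ_apply_left]; rfl
  unfold gfun
  rw [h3]; exact h2

/-- the helper functions appearing in the telescoping derivative -/
noncomputable def afun : ℕ → ℝ → ℝ
  | 0, _ => 0
  | (j+1), t => (1-t)^j / (j.factorial : ℝ) * gfun f x s (j+1) t

lemma term_hasDerivAt {p : ℕ} (hf : ContDiff ℝ (p : ℕ∞) f) {i : ℕ} (hi : i < p) (t : ℝ) :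
    HasDerivAt (fun t => (1-t)^i / (i.factorial : ℝ) * gfun f x s i t)
      (afun f x s (i+1) t - afun f x s i t) t := by
  have hbase : HasDerivAt (fun t : ℝ => 1 - t) (-1) t := by
    simpa using (hasDerivAt_const t (1:ℝ)).fun_sub (hasDerivAt_id t)
  have h1 : HasDerivAt (fun t : ℝ => (1-t)^i / (i.factorial : ℝ))
      ((i * (1-t)^(i-1) * (-1)) / (i.factorial : ℝ)) t := (hbase.pow i).div_const _
  have h2 := (h1.fun_mul (gfun_hasDerivAt f x s hf hi t))
  refine h2.congr_deriv ?_
  cases i with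
  | zero => simp [afun]
  | succ j =>
    simp only [afun, Nat.add_sub_cancel, Nat.factorial_succ]
    have hfac : ((j.factorial : ℝ)) ≠ 0 := by positivity
    push_cast
    field_simp
    ring

end aux
section aux2

variable {n : ℕ} (f : EuclideanSpace ℝ (Fin n) → ℝ) (x s : EuclideanSpace ℝ (Fin n))

noncomputable def Gfun (q : ℕ) (t : ℝ) : ℝ :=
  (∑ i ∈ Finset.range (q+1), (1-t)^i / (i.factorial : ℝ) * gfun f x s i t)
    + (1-t)^(q+1) / ((q+1).factorial : ℝ) * gfun f x s (q+1) 0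

lemma Gfun_hasDerivAt {q : ℕ} (hf : ContDiff ℝ ((q+1 : ℕ) : ℕ∞) f) (t : ℝ) :
    HasDerivAt (Gfun f x s q)
      ((1-t)^q / (q.factorial : ℝ) * (gfun f x s (q+1) t - gfun f x s (q+1) 0)) t := by
  have hbase : HasDerivAt (fun t : ℝ => 1 - t) (-1) t := by
    simpa using (hasDerivAt_const t (1:ℝ)).fun_sub (hasDerivAt_id t)
  have hsum : HasDerivAt (fun t => ∑ i ∈ Finset.range (q+1),
      (1-t)^i / (i.factorial : ℝ) * gfun f x s i t)
      (∑ i ∈ Finset.range (q+1), (afun f x s (i+1) t - afun f x s i t)) t := by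
    exact HasDerivAt.fun_sum (fun i hi => term_hasDerivAt f x s hf (Finset.mem_range.mp hi) t)
  have htel : (∑ i ∈ Finset.range (q+1), (afun f x s (i+1) t - afun f x s i t))
      = afun f x s (q+1) t - afun f x s 0 t := Finset.sum_range_sub (fun i => afun f x s i t) (q+1)
  have hlast : HasDerivAt (fun t : ℝ => (1-t)^(q+1) / ((q+1).factorial : ℝ) * gfun f x s (q+1) 0)
      (((q+1 : ℕ) * (1-t)^q * (-1)) / ((q+1).factorial : ℝ) * gfun f x s (q+1) 0) t := by
    have := ((hbase.pow (q+1)).div_const ((q+1).factorial : ℝ)).mul_const (gfun f x s (q+1) 0)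
    simpa using this
  have h := hsum.fun_add hlast
  rw [htel] at h
  refine h.congr_deriv ?_
  simp only [afun, Nat.factorial_succ]
  have hfac : ((q.factorial : ℝ)) ≠ 0 := by positivity
  push_cast
  field_simp
  ring

lemma gfun_lip {p : ℕ} (L : ℝ)
    (hlip : ∀ x y : EuclideanSpace ℝ (Fin n),
      ‖iteratedFDeriv ℝ p f x - iteratedFDeriv ℝ p f y‖ ≤ L * ‖x - y‖)
    {t : ℝ} (ht : 0 ≤ t) :
    |gfun f x s p t - gfun f x s p 0| ≤ L * t * ‖s‖^(p+1) := by
  have h0 : gfun f x s p 0 = iteratedFDeriv ℝ p f x (fun _ => s) := by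
    simp [gfun]
  have hsub : gfun f x s p t - gfun f x s p 0
      = (iteratedFDeriv ℝ p f (x + t • s) - iteratedFDeriv ℝ p f x) (fun _ => s) := by
    rw [h0, ContinuousMultilinearMap.sub_apply]; rfl
  rw [hsub, ← Real.norm_eq_abs]
  calc ‖(iteratedFDeriv ℝ p f (x + t • s) - iteratedFDeriv ℝ p f x) (fun _ => s)‖
      ≤ ‖iteratedFDeriv ℝ p f (x + t • s) - iteratedFDeriv ℝ p f x‖ * ∏ _i : Fin p, ‖s‖ :=
        ContinuousMultilinearMap.le_opNorm _ _
    _ ≤ (L * ‖(x + t • s) - x‖) * ∏ _i : Fin p, ‖s‖ := by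
        apply mul_le_mul_of_nonneg_right (hlip _ _)
        positivity
    _ = L * t * ‖s‖^(p+1) := by
        rw [add_sub_cancel_left, norm_smul, Real.norm_eq_abs, abs_of_nonneg ht]
        simp [Finset.prod_const, pow_succ]
        ring

end aux2
section aux3

variable {n : ℕ} (f : EuclideanSpace ℝ (Fin n) → ℝ) (x s : EuclideanSpace ℝ (Fin n))

noncomputable def Bfun (L : ℝ) (q : ℕ) (s : EuclideanSpace ℝ (Fin n)) (t : ℝ) : ℝ :=
  (L * ‖s‖^(q+2) / (q.factorial : ℝ)) * ((1-t)^(q+2)/(q+2) - (1-t)^(q+1)/(q+1))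

lemma Bfun_hasDerivAt (L : ℝ) (q : ℕ) (t : ℝ) :
    HasDerivAt (Bfun (n := n) L q s)
      ((L * ‖s‖^(q+2) / (q.factorial : ℝ)) * (t * (1-t)^q)) t := by
  have hbase : HasDerivAt (fun t : ℝ => 1 - t) (-1) t := by
    simpa using (hasDerivAt_const t (1:ℝ)).fun_sub (hasDerivAt_id t)
  have h1 := ((hbase.pow (q+2)).div_const ((q:ℝ)+2)).fun_sub ((hbase.pow (q+1)).div_const ((q:ℝ)+1))
  have h2 := h1.const_mul (L * ‖s‖^(q+2) / (q.factorial : ℝ))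
  refine h2.congr_deriv ?_
  simp only [Nat.add_sub_cancel]
  have hq1 : ((q:ℝ)+1) ≠ 0 := by positivity
  have hq2 : ((q:ℝ)+2) ≠ 0 := by positivity
  push_cast
  field_simp
  ring

lemma remainder_bound {p : ℕ} (hp : 1 ≤ p) (L : ℝ) (hL : 0 ≤ L)
    (hf : ContDiff ℝ (p : ℕ∞) f)
    (hlip : ∀ x y : EuclideanSpace ℝ (Fin n),
      ‖iteratedFDeriv ℝ p f x - iteratedFDeriv ℝ p f y‖ ≤ L * ‖x - y‖) :
    |f (x + s) - taylorPoly p f x s| ≤ L * ‖s‖^(p+1) / ((p+1).factorial : ℝ) := by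
  obtain ⟨q, rfl⟩ : ∃ q, p = q + 1 := ⟨p - 1, (Nat.succ_pred_eq_of_pos hp).symm⟩
  set K : ℝ := L * ‖s‖^(q+2) / (q.factorial : ℝ) with hK
  have hK0 : 0 ≤ K := by positivity
  -- derivative bound on [0,1]
  have hbound : ∀ t ∈ Set.Icc (0:ℝ) 1,
      |(1-t)^q / (q.factorial : ℝ) * (gfun f x s (q+1) t - gfun f x s (q+1) 0)|
        ≤ K * (t * (1-t)^q) := by
    intro t ht
    obtain ⟨ht0, ht1⟩ := ht
    have h1t : (0:ℝ) ≤ 1 - t := by linarith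
    rw [abs_mul]
    have hg := gfun_lip f x s L hlip ht0
    have habs : |(1-t)^q / (q.factorial : ℝ)| = (1-t)^q / (q.factorial : ℝ) := by
      rw [abs_of_nonneg]; positivity
    rw [habs]
    calc (1-t)^q / (q.factorial : ℝ) * |gfun f x s (q+1) t - gfun f x s (q+1) 0|
        ≤ (1-t)^q / (q.factorial : ℝ) * (L * t * ‖s‖^(q+2)) := by
          apply mul_le_mul_of_nonneg_left hg; positivity
      _ = K * (t * (1-t)^q) := by rw [hK]; ring
  -- monotonicity argument
  have hmain : |Gfun f x s q 1 - Gfun f x s q 0| ≤ Bfun L q s 1 - Bfun L q s 0 := by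
    have key : ∀ (c : ℝ), c = 1 ∨ c = -1 →
        Bfun L q s 0 + c * Gfun f x s q 0 ≤ Bfun L q s 1 + c * Gfun f x s q 1 := by
      intro c hc
      have hd : ∀ t : ℝ, HasDerivAt (fun t => Bfun (n:=n) L q s t + c * Gfun f x s q t)
          (K * (t * (1-t)^q) + c * ((1-t)^q / (q.factorial : ℝ)
            * (gfun f x s (q+1) t - gfun f x s (q+1) 0))) t := fun t =>
        (Bfun_hasDerivAt s L q t).add ((Gfun_hasDerivAt f x s hf t).const_mul c)
      have hmono : MonotoneOn (fun t => Bfun (n:=n) L q s t + c * Gfun f x s q t)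
          (Set.Icc (0:ℝ) 1) := by
        apply monotoneOn_of_deriv_nonneg (convex_Icc 0 1)
        · exact fun t _ => ((hd t).continuousAt).continuousWithinAt
        · intro t _
          exact ((hd t).differentiableAt).differentiableWithinAt
        · intro t ht
          rw [interior_Icc] at ht
          rw [(hd t).deriv]
          have hb := hbound t ⟨le_of_lt ht.1, le_of_lt ht.2⟩
          rcases hc with rfl | rfl
          · nlinarith [neg_abs_le ((1-t)^q / (q.factorial : ℝ)
              * (gfun f x s (q+1) t - gfun f x s (q+1) 0))]
          · nlinarith [le_abs_self ((1-t)^q / (q.factorial : ℝ)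
              * (gfun f x s (q+1) t - gfun f x s (q+1) 0))]
      exact hmono (Set.mem_Icc.mpr ⟨le_refl 0, zero_le_one⟩)
        (Set.mem_Icc.mpr ⟨zero_le_one, le_refl 1⟩) zero_le_one
    have h1 := key (-1) (Or.inr rfl)
    have h2 := key 1 (Or.inl rfl)
    rw [abs_le]; constructor <;> nlinarith
  -- endpoint values
  have hG1 : Gfun f x s q 1 = f (x + s) := by
    unfold Gfun
    rw [Finset.sum_eq_single_of_mem 0 (Finset.mem_range.mpr (Nat.succ_pos q))]
    · simp [gfun]
    · intro i _ hi
      simp [zero_pow hi]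
  have hG0 : Gfun f x s q 0 = taylorPoly (q+1) f x s := by
    have hg0 : ∀ i, gfun f x s i 0 = iteratedFDeriv ℝ i f x (fun _ => s) := fun i => by
      simp [gfun]
    have hIcc : ∑ i ∈ Finset.Icc 1 (q+1),
        (1 / (i.factorial : ℝ)) * iteratedFDeriv ℝ i f x (fun _ => s)
        = ∑ i ∈ Finset.range (q+1),
          (1 / ((i+1).factorial : ℝ)) * iteratedFDeriv ℝ (i+1) f x (fun _ => s) := by
      rw [← Finset.Ico_add_one_right_eq_Icc, Finset.sum_Ico_eq_sum_range]
      exact Finset.sum_congr rfl fun i _ => by rw [add_comm 1 i]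
    unfold Gfun taylorPoly
    simp only [sub_zero, one_pow, hg0, hIcc]
    rw [show (∑ i ∈ Finset.range (q+1),
        1 / (i.factorial : ℝ) * iteratedFDeriv ℝ i f x (fun _ => s))
        + 1 / ((q+1).factorial : ℝ) * iteratedFDeriv ℝ (q+1) f x (fun _ => s)
        = ∑ i ∈ Finset.range (q+2),
          1 / (i.factorial : ℝ) * iteratedFDeriv ℝ i f x (fun _ => s)
        from (Finset.sum_range_succ _ (q+1)).symm]
    rw [Finset.sum_range_succ']
    simp [iteratedFDeriv_zero_apply, add_comm]
  -- value of B at endpoints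
  have hB : Bfun L q s 1 - Bfun L q s 0 = L * ‖s‖^(q+2) / ((q+2).factorial : ℝ) := by
    unfold Bfun
    have hfac : ((q+2).factorial : ℝ) = ((q:ℝ)+2) * (((q:ℝ)+1) * (q.factorial : ℝ)) := by
      rw [show q+2 = (q+1)+1 from rfl, Nat.factorial_succ, Nat.factorial_succ]
      push_cast; ring
    have hq0 : ((q.factorial : ℝ)) ≠ 0 := by positivity
    have hq1 : ((q:ℝ)+1) ≠ 0 := by positivity
    have hq2 : ((q:ℝ)+2) ≠ 0 := by positivity
    rw [hfac]
    field_simp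
    ring
  rw [← hG1, ← hG0, show ((q+1)+1) = q+2 from rfl, ← hB]
  exact hmain

end aux3
/-- If the Taylor decrease condition holds and `σ_k ≥ 2 L_p`, then
`f(x_k) - f(x_k + s_k) > (σ_k/(2(p+1)!))‖s_k‖^(p+1)`. -/
theorem function_decrease {n : ℕ} (p : ℕ) (hp : 1 ≤ p)
    (f : EuclideanSpace ℝ (Fin n) → ℝ) (L σ : ℝ) (hL : 0 ≤ L)
    (hf : ContDiff ℝ (p : ℕ∞) f)
    (hlip : ∀ x y : EuclideanSpace ℝ (Fin n),
      ‖iteratedFDeriv ℝ p f x - iteratedFDeriv ℝ p f y‖ ≤ L * ‖x - y‖)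
    (xk sk : EuclideanSpace ℝ (Fin n))
    (hTdecr : taylorPoly p f xk 0 - taylorPoly p f xk sk
      > σ / ((p + 1).factorial : ℝ) * ‖sk‖ ^ (p + 1))
    (hσ : 2 * L ≤ σ) :
    f xk - f (xk + sk) > σ / (2 * ((p + 1).factorial : ℝ)) * ‖sk‖ ^ (p + 1) := by
  have hT0 : taylorPoly p f xk 0 = f xk := by
    unfold taylorPoly
    have hz : ∀ i ∈ Finset.Icc 1 p, (1 / (i.factorial : ℝ))
        * iteratedFDeriv ℝ i f xk (fun _ => (0 : EuclideanSpace ℝ (Fin n))) = 0 := by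
      intro i hi
      have h1 : 1 ≤ i := (Finset.mem_Icc.mp hi).1
      have h2 : iteratedFDeriv ℝ i f xk (fun _ => (0 : EuclideanSpace ℝ (Fin n))) = 0 :=
        ContinuousMultilinearMap.map_coord_zero _ (⟨0, h1⟩ : Fin i) rfl
      rw [h2]; ring
    rw [Finset.sum_eq_zero hz, add_zero]
  have hrem := remainder_bound f xk sk hp L hL hf hlip
  rw [abs_le] at hrem
  rw [hT0] at hTdecr
  set F : ℝ := ((p+1).factorial : ℝ) with hFdef
  have hF : 0 < F := by rw [hFdef]; positivity
  set C : ℝ := ‖sk‖ ^ (p+1) with hCdef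
  have hC : 0 ≤ C := by rw [hCdef]; positivity
  have hdiv : σ / (2*F) ≤ (σ - L) / F := by
    rw [div_le_div_iff₀ (by positivity) hF]
    nlinarith
  have key : σ / (2*F) * C ≤ σ / F * C - L * C / F := by
    have := mul_le_mul_of_nonneg_right hdiv hC
    calc σ / (2*F) * C ≤ (σ - L) / F * C := this
      _ = σ / F * C - L * C / F := by ring
  linarith [hrem.2, hTdecr, key]
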